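/- Assume hypotheses (H1) and (H2), and assume in addition that X is a linear subspace of L¹([0,1], Lebesgue) with ‖f‖_{L¹} ≤ C₁‖f‖ for all f ∈ X and some constant C₁ > 0, and that for every k ∈ ℕ and ℙ-a.e. ω, the operator 𝓛_{k,ω} maps nonnegative functions to nonnegative functions and satisfies ∫ 𝓛_{k,ω} f dm = ∫ f dm for all f ∈ X (m = Lebesgue measure). Then for every k ∈ ℕ and every f ∈ X with ∫ f dm ≠ 0, for ℙ-a.e. ω, lim_{n→∞} (1/n) log ‖𝓛_{k,ω}^{(n)} f‖ = 0; consequently lim_{n→∞} (1/n) log ‖𝓛_{k,ω}^{(n)}‖_{op} = 0 for ℙ-a.e. ω, where ‖·‖_{op} denotes the operator norm induced by the strong norm. -/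

import Mathlib

set_option linter.unusedVariables false
set_option linter.unusedSectionVars false
set_option linter.unnecessarySimpa false
set_option maxHeartbeats 1000000


open MeasureTheory Filter

/-- A function `f : Ω → ℝ` is *tempered* with respect to the invertible
transformation `σ` if for `ℙ`-a.e. `ω`, `(1/|n|) * log |f(σⁿ ω)| → 0` as `n → ±∞`. -/
def Tempered {Ω : Type*} [MeasurableSpace Ω] (ℙ : Measure Ω) (σ : Equiv.Perm Ω)
    (f : Ω → ℝ) : Prop :=
  ∀ᵐ ω ∂ℙ, Tendsto (fun n : ℤ => (1 / |(n : ℝ)|) * Real.log |f ((σ ^ n) ω)|)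
    cofinite (nhds 0)

/-- The iterated cocycle `𝓛_ω^{(n)} = 𝓛_{σ^{n-1} ω} ∘ ⋯ ∘ 𝓛_{σ ω} ∘ 𝓛_ω`. -/
noncomputable def iterOp {Ω X : Type*} [NormedAddCommGroup X] [NormedSpace ℝ X]
    (σ : Equiv.Perm Ω) (L : Ω → X →L[ℝ] X) (ω : Ω) : ℕ → (X →L[ℝ] X)
  | 0 => ContinuousLinearMap.id ℝ X
  | n + 1 => (L ((σ ^ n) ω)).comp (iterOp σ L ω n)

namespace Stmt4Aux

variable {Ω : Type*} [MeasurableSpace Ω] {ℙ : Measure Ω} [IsProbabilityMeasure ℙ]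
  {T : Ω → Ω} {g : Ω → ℝ}

/-- Running maximum `max_{0 ≤ n ≤ N} S_n` of Birkhoff sums. -/
noncomputable def maxS (T : Ω → Ω) (g : Ω → ℝ) : ℕ → Ω → ℝ
  | 0 => fun _ => 0
  | N + 1 => fun ω => max (birkhoffSum T g (N + 1) ω) (maxS T g N ω)

lemma maxS_nonneg (N : ℕ) (ω : Ω) : 0 ≤ maxS T g N ω := by
  induction N with
  | zero => simp [maxS]
  | succ N ih => exact le_trans ih (le_max_right _ _)

lemma maxS_mono {N M : ℕ} (h : N ≤ M) (ω : Ω) : maxS T g N ω ≤ maxS T g M ω := by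
  induction M with
  | zero => simp_all
  | succ M ih =>
    rcases Nat.lt_succ_iff_lt_or_eq.mp (Nat.lt_succ_of_le h) with h' | h'
    · exact le_trans (ih (Nat.lt_succ_iff.mp h')) (le_max_right _ _)
    · subst h'; rfl

lemma birkhoffSum_le_maxS {n N : ℕ} (h : n ≤ N) (ω : Ω) :
    birkhoffSum T g n ω ≤ maxS T g N ω := by
  induction N with
  | zero =>
    interval_cases n
    simp [birkhoffSum_zero, maxS]
  | succ N ih =>
    rcases Nat.lt_succ_iff_lt_or_eq.mp (Nat.lt_succ_of_le h) with h' | h'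
    · exact le_trans (ih (Nat.lt_succ_iff.mp h')) (le_max_right _ _)
    · subst h'; exact le_max_left _ _

lemma maxS_succ_le (N : ℕ) (ω : Ω) :
    maxS T g (N + 1) ω ≤ max 0 (g ω + maxS T g N (T ω)) := by
  induction N with
  | zero =>
    simp only [maxS, birkhoffSum_one]
    have : g ω + 0 ≤ g ω + maxS T g 0 (T ω) := by simp [maxS]
    refine max_le ?_ (le_max_left _ _)
    simpa [maxS] using le_max_right 0 (g ω + maxS T g 0 (T ω))
  | succ N ih =>
    show max (birkhoffSum T g (N + 2) ω) (maxS T g (N + 1) ω) ≤ _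
    refine max_le ?_ ?_
    · rw [birkhoffSum_succ' T g (N + 1) ω]
      refine le_trans ?_ (le_max_right _ _)
      exact add_le_add (le_refl _) (birkhoffSum_le_maxS (le_refl (N + 1)) (T ω))
    · refine le_trans ih (max_le (le_max_left _ _) ?_)
      refine le_trans (add_le_add (le_refl _) (maxS_mono (Nat.le_succ N) (T ω)))
        (le_max_right _ _)

lemma measurable_birkhoffSum (hT : Measurable T) (hg : Measurable g) (n : ℕ) :
    Measurable (birkhoffSum T g n) := by
  apply Finset.measurable_sum
  intro i _
  exact hg.comp (hT.iterate i)

lemma measurable_maxS (hT : Measurable T) (hg : Measurable g) (N : ℕ) :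
    Measurable (maxS T g N) := by
  induction N with
  | zero => exact measurable_const
  | succ N ih => exact (measurable_birkhoffSum hT hg (N + 1)).max ih

lemma integrable_birkhoffSum (hT : MeasurePreserving T ℙ ℙ) (hg : Measurable g)
    (hgi : Integrable g ℙ) (n : ℕ) : Integrable (birkhoffSum T g n) ℙ := by
  induction n with
  | zero =>
    have : (birkhoffSum T g 0 : Ω → ℝ) = fun _ => 0 := by ext ω; simp [birkhoffSum_zero]
    rw [this]; exact integrable_const (0:ℝ)
  | succ n ih =>
    have h1 : Integrable (fun ω => g (T^[n] ω)) ℙ :=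
      (hT.iterate n).integrable_comp hgi.aestronglyMeasurable |>.mpr hgi
    have := ih.add h1
    refine this.congr ?_
    filter_upwards with ω
    exact (birkhoffSum_succ T g n ω).symm

lemma integrable_maxS (hT : MeasurePreserving T ℙ ℙ) (hg : Measurable g)
    (hgi : Integrable g ℙ) (N : ℕ) : Integrable (maxS T g N) ℙ := by
  induction N with
  | zero => exact (integrable_const (0:ℝ) (μ := ℙ)).congr (by filter_upwards with ω; rfl)
  | succ N ih =>
    have h1 := integrable_birkhoffSum hT hg hgi (N + 1)
    exact h1.sup ih

lemma maximal_ergodic (hT : MeasurePreserving T ℙ ℙ) (hgm : Measurable g)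
    (hgi : Integrable g ℙ) (N : ℕ) :
    0 ≤ ∫ ω in {ω | 0 < maxS T g N ω}, g ω ∂ℙ := by
  rcases N with _ | N
  · have : {ω | 0 < maxS T g 0 ω} = (∅ : Set Ω) := by
      ext ω; simp [maxS]
    simp [this]
  set A := {ω | 0 < maxS T g (N + 1) ω} with hA
  have hAmeas : MeasurableSet A := measurableSet_lt measurable_const
    (measurable_maxS hT.measurable hgm (N + 1))
  have hRi : Integrable (maxS T g (N + 1)) ℙ := integrable_maxS hT hgm hgi (N + 1)
  have hRNi : Integrable (maxS T g N) ℙ := integrable_maxS hT hgm hgi N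
  have hRTi : Integrable (fun ω => maxS T g N (T ω)) ℙ :=
    (hT.integrable_comp hRNi.aestronglyMeasurable).mpr hRNi
  -- pointwise inequality on A
  have hpt : ∀ ω ∈ A, maxS T g (N + 1) ω - maxS T g N (T ω) ≤ g ω := by
    intro ω hω
    have h1 := maxS_succ_le (T := T) (g := g) N ω
    have h2 : (0:ℝ) < maxS T g (N + 1) ω := hω
    have h3 : maxS T g (N + 1) ω ≤ g ω + maxS T g N (T ω) := by
      rcases le_or_gt (g ω + maxS T g N (T ω)) 0 with h | h
      · exfalso; rw [max_eq_left h] at h1; linarith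
      · rwa [max_eq_right h.le] at h1
    linarith
  have step1 : ∫ ω in A, (maxS T g (N + 1) ω - maxS T g N (T ω)) ∂ℙ ≤ ∫ ω in A, g ω ∂ℙ := by
    apply setIntegral_mono_on (hRi.sub hRTi).integrableOn hgi.integrableOn hAmeas hpt
  have split : ∫ ω in A, (maxS T g (N + 1) ω - maxS T g N (T ω)) ∂ℙ
      = ∫ ω in A, maxS T g (N + 1) ω ∂ℙ - ∫ ω in A, maxS T g N (T ω) ∂ℙ :=
    integral_sub hRi.integrableOn hRTi.integrableOn
  have e1 : ∫ ω in A, maxS T g (N + 1) ω ∂ℙ = ∫ ω, maxS T g (N + 1) ω ∂ℙ := by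
    rw [← integral_add_compl hAmeas hRi]
    have : ∫ ω in Aᶜ, maxS T g (N + 1) ω ∂ℙ = 0 := by
      apply setIntegral_eq_zero_of_forall_eq_zero
      intro ω hω
      have : ¬ (0 < maxS T g (N + 1) ω) := hω
      exact le_antisymm (not_lt.mp this) (maxS_nonneg _ _)
    rw [this, add_zero]
  have e2 : ∫ ω in A, maxS T g N (T ω) ∂ℙ ≤ ∫ ω, maxS T g N (T ω) ∂ℙ := by
    apply setIntegral_le_integral hRTi
    filter_upwards with ω using maxS_nonneg _ _
  have e3 : ∫ ω, maxS T g N (T ω) ∂ℙ = ∫ ω, maxS T g N ω ∂ℙ := by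
    rw [← integral_map hT.measurable.aemeasurable
      (measurable_maxS hT.measurable hgm N).aestronglyMeasurable, hT.map_eq]
  have e4 : ∫ ω, maxS T g N ω ∂ℙ ≤ ∫ ω, maxS T g (N + 1) ω ∂ℙ :=
    integral_mono hRNi hRi (fun ω => maxS_mono (Nat.le_succ N) ω)
  linarith

/-- Under ergodicity and negative mean, Birkhoff sums are a.e. bounded above. -/
lemma birkhoffSum_bddAbove (herg : Ergodic T ℙ) (hgm : Measurable g)
    (hgi : Integrable g ℙ) (hneg : ∫ ω, g ω ∂ℙ < 0) :
    ∀ᵐ ω ∂ℙ, ∃ K : ℝ, ∀ n : ℕ, birkhoffSum T g n ω ≤ K := by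
  have hT : MeasurePreserving T ℙ ℙ := herg.toMeasurePreserving
  set E := {ω | ∀ K : ℕ, ∃ n : ℕ, (K : ℝ) < birkhoffSum T g n ω} with hE
  have hEmeas : MeasurableSet E := by
    have hrw : E = ⋂ (K : ℕ), ⋃ (n : ℕ), {ω | (K : ℝ) < birkhoffSum T g n ω} := by
      ext ω; simp [hE, Set.mem_iInter, Set.mem_iUnion, Set.mem_setOf_eq]
    rw [hrw]
    exact MeasurableSet.iInter fun K => MeasurableSet.iUnion fun n =>
      measurableSet_lt measurable_const (measurable_birkhoffSum hT.measurable hgm n)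
  have hEiff : ∀ ω, ω ∈ E ↔ (∀ K : ℝ, ∃ n : ℕ, K < birkhoffSum T g n ω) := by
    intro ω
    constructor
    · intro h K
      obtain ⟨m, hm⟩ := exists_nat_ge K
      obtain ⟨n, hn⟩ := h m
      exact ⟨n, lt_of_le_of_lt hm hn⟩
    · intro h K; exact h K
  have hEinv : T ⁻¹' E = E := by
    ext ω
    simp only [Set.mem_preimage]
    rw [hEiff, hEiff]
    constructor
    · intro h K
      obtain ⟨n, hn⟩ := h (K - g ω)
      refine ⟨n + 1, ?_⟩
      rw [birkhoffSum_succ' T g n ω]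
      linarith
    · intro h K
      obtain ⟨n, hn⟩ := h (max (K + g ω) 0)
      have hn0 : n ≠ 0 := by
        rintro rfl
        rw [birkhoffSum_zero] at hn
        exact absurd hn (not_lt.mpr (le_max_right _ _))
      obtain ⟨m, rfl⟩ := Nat.exists_eq_succ_of_ne_zero hn0
      refine ⟨m, ?_⟩
      rw [birkhoffSum_succ' T g m ω] at hn
      have := le_max_left (K + g ω) 0
      linarith
  rcases herg.ae_empty_or_univ hEmeas hEinv with h | h
  · -- E is null: done
    have : ℙ E = 0 := by
      have := measure_congr h
      simpa using this
    filter_upwards [measure_eq_zero_iff_ae_notMem.mp this] with ω hω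
    simp only [hE, Set.mem_setOf_eq, not_forall, not_exists, not_lt] at hω
    obtain ⟨K, hK⟩ := hω
    exact ⟨K, hK⟩
  · -- E is conull: contradiction with hneg
    exfalso
    set A := fun N => {ω | 0 < maxS T g N ω} with hA
    have hAmeas : ∀ N, MeasurableSet (A N) := fun N =>
      measurableSet_lt measurable_const (measurable_maxS hT.measurable hgm N)
    have hAmono : Monotone A := by
      intro N M hNM ω hω
      exact lt_of_lt_of_le hω (maxS_mono hNM ω)
    set Ainf := ⋃ N, A N with hAinf
    have htend : Tendsto (fun N => ∫ ω in A N, g ω ∂ℙ) atTop (nhds (∫ ω in Ainf, g ω ∂ℙ)) :=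
      tendsto_setIntegral_of_monotone hAmeas hAmono hgi.integrableOn
    have hge : 0 ≤ ∫ ω in Ainf, g ω ∂ℙ :=
      ge_of_tendsto' htend (fun N => maximal_ergodic hT hgm hgi N)
    -- E ⊆ Ainf
    have hEsub : E ⊆ Ainf := by
      intro ω hω
      obtain ⟨n, hn⟩ := hω 0
      simp only [Nat.cast_zero] at hn
      refine Set.mem_iUnion.mpr ⟨n, ?_⟩
      exact lt_of_lt_of_le hn (birkhoffSum_le_maxS (le_refl n) ω)
    have hE1 : ℙ E = 1 := by
      have := measure_congr h
      simpa using this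
    have hA1 : ℙ Ainf = 1 := le_antisymm prob_le_one
      (hE1 ▸ measure_mono hEsub)
    have hAc : ℙ Ainfᶜ = 0 := by
      have hAm : MeasurableSet Ainf := MeasurableSet.iUnion hAmeas
      rw [measure_compl hAm (measure_ne_top _ _), hA1]
      simp
    have : ∫ ω in Ainf, g ω ∂ℙ = ∫ ω, g ω ∂ℙ := by
      rw [← integral_add_compl (MeasurableSet.iUnion hAmeas) hgi]
      have : ∫ ω in Ainfᶜ, g ω ∂ℙ = 0 := by
        rw [Measure.restrict_eq_zero.mpr hAc]
        exact integral_zero_measure _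
      rw [this, add_zero]
    linarith [this ▸ hge]

/-- Two-sided a.e. Birkhoff bound from the one-sided boundedness lemma. -/
lemma birkhoff_bound (herg : Ergodic T ℙ) (hgm : Measurable g) (hgi : Integrable g ℙ) :
    ∀ᵐ ω ∂ℙ, ∀ ε : ℝ, 0 < ε → ∃ K : ℝ, 0 ≤ K ∧ ∀ n : ℕ,
      |birkhoffSum T g n ω - n * ∫ x, g x ∂ℙ| ≤ ε * n + K := by
  set lam := ∫ x, g x ∂ℙ with hlam
  have hsub : ∀ (c : ℝ) (n : ℕ) (ω : Ω), birkhoffSum T (fun ω => g ω - c) n ω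
      = birkhoffSum T g n ω - n * c := by
    intro c n ω
    simp [birkhoffSum, Finset.sum_sub_distrib, mul_comm]
  have hsub2 : ∀ (c : ℝ) (n : ℕ) (ω : Ω), birkhoffSum T (fun ω => c - g ω) n ω
      = n * c - birkhoffSum T g n ω := by
    intro c n ω
    simp [birkhoffSum, Finset.sum_sub_distrib, mul_comm]
  have h1 : ∀ j : ℕ, ∀ᵐ ω ∂ℙ, ∃ K : ℝ, ∀ n : ℕ,
      birkhoffSum T g n ω - n * (lam + 1/(j+1)) ≤ K := by
    intro j
    have hd : (0:ℝ) < 1/((j:ℝ)+1) := by positivity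
    have hint : Integrable (fun ω => g ω - (lam + 1/((j:ℝ)+1))) ℙ := hgi.sub (integrable_const _)
    have hmeas : Measurable (fun ω => g ω - (lam + 1/((j:ℝ)+1))) := hgm.sub measurable_const
    have hneg : ∫ ω, (g ω - (lam + 1/((j:ℝ)+1))) ∂ℙ < 0 := by
      rw [integral_sub hgi (integrable_const _), integral_const]
      simp only [measure_univ, probReal_univ, ENNReal.toReal_one, one_smul, ← hlam]
      linarith
    filter_upwards [birkhoffSum_bddAbove herg hmeas hint hneg] with ω hω
    obtain ⟨K, hK⟩ := hω
    exact ⟨K, fun n => by have := hK n; rwa [hsub] at this⟩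
  have h2 : ∀ j : ℕ, ∀ᵐ ω ∂ℙ, ∃ K : ℝ, ∀ n : ℕ,
      n * (lam - 1/(j+1)) - birkhoffSum T g n ω ≤ K := by
    intro j
    have hd : (0:ℝ) < 1/((j:ℝ)+1) := by positivity
    have hint : Integrable (fun ω => (lam - 1/((j:ℝ)+1)) - g ω) ℙ :=
      (integrable_const _).sub hgi
    have hmeas : Measurable (fun ω => (lam - 1/((j:ℝ)+1)) - g ω) := measurable_const.sub hgm
    have hneg : ∫ ω, ((lam - 1/((j:ℝ)+1)) - g ω) ∂ℙ < 0 := by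
      rw [integral_sub (integrable_const _) hgi, integral_const]
      simp only [measure_univ, probReal_univ, ENNReal.toReal_one, one_smul, ← hlam]
      linarith
    filter_upwards [birkhoffSum_bddAbove herg hmeas hint hneg] with ω hω
    obtain ⟨K, hK⟩ := hω
    exact ⟨K, fun n => by have := hK n; rwa [hsub2] at this⟩
  have h12 : ∀ᵐ ω ∂ℙ, ∀ j : ℕ, (∃ K : ℝ, ∀ n : ℕ,
      birkhoffSum T g n ω - n * (lam + 1/(j+1)) ≤ K) ∧ (∃ K : ℝ, ∀ n : ℕ,
      n * (lam - 1/(j+1)) - birkhoffSum T g n ω ≤ K) := by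
    rw [ae_all_iff]
    exact fun j => (h1 j).and (h2 j)
  filter_upwards [h12] with ω hω ε hε
  obtain ⟨j, hj⟩ := exists_nat_one_div_lt hε
  obtain ⟨⟨K1, hK1⟩, ⟨K2, hK2⟩⟩ := hω j
  refine ⟨max (max K1 K2) 0, le_max_right _ _, fun n => ?_⟩
  have hn0 : (0:ℝ) ≤ n := Nat.cast_nonneg n
  have hdn : (n:ℝ) * (1/((j:ℝ)+1)) ≤ ε * n := by
    rw [mul_comm (ε : ℝ) (n : ℝ)]
    exact mul_le_mul_of_nonneg_left hj.le hn0
  rw [abs_le]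
  constructor
  · have := hK2 n
    have h1' : K2 ≤ max (max K1 K2) 0 := le_trans (le_max_right K1 K2) (le_max_left _ _)
    nlinarith [this]
  · have := hK1 n
    have h1' : K1 ≤ max (max K1 K2) 0 := le_trans (le_max_left K1 K2) (le_max_left _ _)
    nlinarith [this]



/-- Deterministic Lasota–Yorke iteration bound. -/
lemma core_bound {Ω X : Type*} [NormedAddCommGroup X] [NormedSpace ℝ X]
    (σ : Equiv.Perm Ω) (Lk : Ω → X →L[ℝ] X) (wn : X → ℝ)
    (B C₀ : ℝ) (hB : 0 < B) (hwn : ∀ x, wn x ≤ C₀ * ‖x‖)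
    (α C : Ω → ℝ) (hα : ∀ ω', 0 < α ω') (hCpos : ∀ ω', 0 ≤ C ω') (ω : Ω)
    (hLY : ∀ (j : ℕ) (x : X), ‖Lk ((σ ^ j) ω) x‖ ≤ α ((σ ^ j) ω) * ‖x‖ + B * wn x)
    (hW : ∀ (n : ℕ) (x : X), wn (iterOp σ Lk ω n x) ≤ C ((σ ^ n) ω) * wn x) :
    ∀ (n : ℕ) (x : X), ‖iterOp σ Lk ω n x‖ ≤
      (Real.exp (birkhoffSum (⇑σ) (fun ω' => Real.log (α ω')) n ω)
        + B * C₀ * ∑ j ∈ Finset.range n, C ((σ ^ j) ω) *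
          Real.exp (birkhoffSum (⇑σ) (fun ω' => Real.log (α ω')) n ω
            - birkhoffSum (⇑σ) (fun ω' => Real.log (α ω')) (j + 1) ω)) * ‖x‖ := by
  set gl : Ω → ℝ := fun ω' => Real.log (α ω') with hgl
  set S : ℕ → ℝ := fun m => birkhoffSum (⇑σ) gl m ω with hS
  intro n
  induction n with
  | zero =>
    intro x
    simp only [iterOp, ContinuousLinearMap.id_apply, birkhoffSum_zero, Finset.range_zero,
      Finset.sum_empty, Real.exp_zero, mul_zero, add_zero, one_mul, le_refl]
  | succ n ih =>
    intro x
    have happ : iterOp σ Lk ω (n + 1) x = Lk ((σ ^ n) ω) (iterOp σ Lk ω n x) := rfl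
    have hαn : (0:ℝ) < α ((σ ^ n) ω) := hα _
    have hstep : ‖iterOp σ Lk ω (n + 1) x‖ ≤
        α ((σ ^ n) ω) * ‖iterOp σ Lk ω n x‖ + B * (C ((σ ^ n) ω) * (C₀ * ‖x‖)) := by
      rw [happ]
      refine le_trans (hLY n _) ?_
      have h1 : wn (iterOp σ Lk ω n x) ≤ C ((σ ^ n) ω) * wn x := hW n x
      have h2 : wn x ≤ C₀ * ‖x‖ := hwn x
      have h3 : C ((σ ^ n) ω) * wn x ≤ C ((σ ^ n) ω) * (C₀ * ‖x‖) :=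
        mul_le_mul_of_nonneg_left h2 (hCpos _)
      nlinarith [hB]
    have hSn : S (n + 1) = S n + gl ((σ ^ n) ω) := by
      rw [hS]
      simp only
      rw [birkhoffSum_succ]
      rfl
    have hexp : Real.exp (gl ((σ ^ n) ω)) = α ((σ ^ n) ω) := Real.exp_log hαn
    have hsum : ∑ j ∈ Finset.range (n + 1), C ((σ ^ j) ω) * Real.exp (S (n + 1) - S (j + 1))
        = α ((σ ^ n) ω) * ∑ j ∈ Finset.range n, C ((σ ^ j) ω) * Real.exp (S n - S (j + 1))
          + C ((σ ^ n) ω) := by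
      rw [Finset.sum_range_succ, sub_self, Real.exp_zero, mul_one, Finset.mul_sum]
      congr 1
      refine Finset.sum_congr rfl fun j hj => ?_
      rw [hSn]
      rw [show S n + gl ((σ ^ n) ω) - S (j + 1) = gl ((σ ^ n) ω) + (S n - S (j + 1)) by ring]
      rw [Real.exp_add, hexp]
      ring
    have hexpS : Real.exp (S (n + 1)) = α ((σ ^ n) ω) * Real.exp (S n) := by
      rw [hSn, Real.exp_add, hexp]; ring
    have hIH := ih x
    have hx : (0:ℝ) ≤ ‖x‖ := norm_nonneg x
    calc ‖iterOp σ Lk ω (n + 1) x‖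
        ≤ α ((σ ^ n) ω) * ‖iterOp σ Lk ω n x‖ + B * (C ((σ ^ n) ω) * (C₀ * ‖x‖)) := hstep
      _ ≤ α ((σ ^ n) ω) * ((Real.exp (S n)
            + B * C₀ * ∑ j ∈ Finset.range n, C ((σ ^ j) ω) * Real.exp (S n - S (j + 1))) * ‖x‖)
            + B * (C ((σ ^ n) ω) * (C₀ * ‖x‖)) := by
          have := mul_le_mul_of_nonneg_left hIH hαn.le
          linarith
      _ = (Real.exp (S (n + 1))
            + B * C₀ * ∑ j ∈ Finset.range (n + 1), C ((σ ^ j) ω)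
              * Real.exp (S (n + 1) - S (j + 1))) * ‖x‖ := by
          rw [hsum, hexpS]; ring

/-- Subexponential growth of the explicit bound. -/
lemma weight_bound (S Cs : ℕ → ℝ) (lam : ℝ) (hlam : lam < 0)
    (b : ℝ) (hb : 0 ≤ b)
    (hS : ∀ ε : ℝ, 0 < ε → ∃ K : ℝ, 0 ≤ K ∧ ∀ n : ℕ, |S n - n * lam| ≤ ε * n + K)
    (hC : ∀ ε : ℝ, 0 < ε → ∃ K : ℝ, 1 ≤ K ∧ ∀ n : ℕ, Cs n ≤ K * Real.exp (ε * n)) :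
    ∀ ε : ℝ, 0 < ε → ∃ D : ℝ, 1 ≤ D ∧ ∀ n : ℕ,
      Real.exp (S n) + b * ∑ j ∈ Finset.range n, Cs j * Real.exp (S n - S (j + 1))
        ≤ D * (n + 1) * Real.exp (ε * n) := by
  intro ε hε
  have hε3 : 0 < ε / 3 := by linarith
  obtain ⟨K, hK0, hK⟩ := hS (ε / 3) hε3
  obtain ⟨KC, hKC1, hKC⟩ := hC (ε / 3) hε3
  refine ⟨Real.exp K + b * KC * Real.exp (2 * K), ?_, ?_⟩
  · have h1 : (1:ℝ) ≤ Real.exp K := Real.one_le_exp hK0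
    nlinarith [Real.exp_pos (2 * K), mul_nonneg hb (le_trans zero_le_one hKC1)]
  · intro n
    have hn0 : (0:ℝ) ≤ n := Nat.cast_nonneg n
    have hSn : S n ≤ ε / 3 * n + K + lam * n := by
      have := (abs_le.mp (hK n)).2
      linarith
    have h1 : Real.exp (S n) ≤ Real.exp K * Real.exp (ε * n) := by
      rw [← Real.exp_add]
      apply Real.exp_le_exp.mpr
      have hln : lam * (n:ℝ) ≤ 0 := mul_nonpos_of_nonpos_of_nonneg hlam.le hn0
      nlinarith
    have hterm : ∀ j ∈ Finset.range n,
        Cs j * Real.exp (S n - S (j + 1)) ≤ KC * Real.exp (2 * K) * Real.exp (ε * n) := by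
      intro j hj
      have hjn : j + 1 ≤ n := Finset.mem_range.mp hj
      have hjn' : ((j:ℝ) + 1) ≤ (n:ℝ) := by exact_mod_cast hjn
      have hdiff : S n - S (j + 1) ≤ 2 * (ε / 3) * n + 2 * K := by
        have h2 := (abs_le.mp (hK n)).2
        have h3 := (abs_le.mp (hK (j + 1))).1
        have hcast : ((j + 1 : ℕ) : ℝ) = (j:ℝ) + 1 := by push_cast; ring
        rw [hcast] at h3
        have hlam' : lam * ((n:ℝ) - ((j:ℝ) + 1)) ≤ 0 :=
          mul_nonpos_of_nonpos_of_nonneg hlam.le (by linarith)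
        nlinarith
      have hCj : Cs j ≤ KC * Real.exp (ε / 3 * n) := by
        refine le_trans (hKC j) (mul_le_mul_of_nonneg_left ?_ (by linarith : (0:ℝ) ≤ KC))
        apply Real.exp_le_exp.mpr
        have hj' : (j:ℝ) ≤ n := by linarith
        nlinarith
      have hE : Real.exp (S n - S (j + 1)) ≤ Real.exp (2 * (ε/3) * n + 2 * K) :=
        Real.exp_le_exp.mpr hdiff
      calc Cs j * Real.exp (S n - S (j + 1))
          ≤ (KC * Real.exp (ε / 3 * n)) * Real.exp (2 * (ε / 3) * n + 2 * K) :=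
            mul_le_mul hCj hE (Real.exp_pos _).le
              (mul_nonneg (by linarith) (Real.exp_pos _).le)
        _ = KC * Real.exp (2 * K) * Real.exp (ε * n) := by
            rw [mul_assoc, ← Real.exp_add,
              show ε / 3 * (n:ℝ) + (2 * (ε / 3) * (n:ℝ) + 2 * K) = 2 * K + ε * (n:ℝ) by ring,
              Real.exp_add]
            ring
    have hsum : ∑ j ∈ Finset.range n, Cs j * Real.exp (S n - S (j + 1))
        ≤ n * (KC * Real.exp (2 * K) * Real.exp (ε * n)) := by
      calc ∑ j ∈ Finset.range n, Cs j * Real.exp (S n - S (j + 1))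
          ≤ ∑ _j ∈ Finset.range n, KC * Real.exp (2 * K) * Real.exp (ε * n) :=
            Finset.sum_le_sum hterm
        _ = n * (KC * Real.exp (2 * K) * Real.exp (ε * n)) := by
            rw [Finset.sum_const, Finset.card_range]; simp [nsmul_eq_mul]
    have hpos1 : (0:ℝ) < Real.exp (ε * n) := Real.exp_pos _
    have hpos2 : (0:ℝ) < Real.exp (2 * K) := Real.exp_pos _
    have hpos3 : (0:ℝ) < Real.exp K := Real.exp_pos _
    have e1 : Real.exp (S n) ≤ Real.exp K * (((n:ℝ) + 1) * Real.exp (ε * n)) := by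
      nlinarith [mul_nonneg (mul_nonneg hpos3.le hpos1.le) hn0]
    have e2 : b * ∑ j ∈ Finset.range n, Cs j * Real.exp (S n - S (j + 1))
        ≤ b * KC * Real.exp (2 * K) * (((n:ℝ) + 1) * Real.exp (ε * n)) := by
      have h2 := mul_le_mul_of_nonneg_left hsum hb
      have hKC0 : (0:ℝ) ≤ KC := le_trans zero_le_one hKC1
      nlinarith [mul_nonneg (mul_nonneg (mul_nonneg hb hKC0) hpos2.le) hpos1.le]
    calc Real.exp (S n) + b * ∑ j ∈ Finset.range n, Cs j * Real.exp (S n - S (j + 1))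
        ≤ Real.exp K * (((n:ℝ) + 1) * Real.exp (ε * n))
          + b * KC * Real.exp (2 * K) * (((n:ℝ) + 1) * Real.exp (ε * n)) := add_le_add e1 e2
      _ = (Real.exp K + b * KC * Real.exp (2 * K)) * ((n:ℝ) + 1) * Real.exp (ε * n) := by ring

lemma tendsto_of_bounds (a : ℕ → ℝ) (c : ℝ) (hc : 0 < c) (hlow : ∀ n, c ≤ a n)
    (hup : ∀ ε : ℝ, 0 < ε → ∃ D : ℝ, 1 ≤ D ∧ ∀ n : ℕ, a n ≤ D * (n + 1) * Real.exp (ε * n)) :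
    Tendsto (fun n : ℕ => (1 / (n:ℝ)) * Real.log (a n)) atTop (nhds 0) := by
  rw [tendsto_order]
  constructor
  · intro b hb
    have h1 : Tendsto (fun n : ℕ => (1/(n:ℝ)) * Real.log c) atTop (nhds 0) := by
      simpa using (tendsto_one_div_atTop_nhds_zero_nat).mul_const (Real.log c)
    have h2 := (tendsto_order.mp h1).1 b hb
    filter_upwards [h2, eventually_ge_atTop 1] with n hn hn1
    have hnn : (0:ℝ) < (n:ℝ) := by exact_mod_cast hn1
    calc b < (1/(n:ℝ)) * Real.log c := hn
      _ ≤ (1/(n:ℝ)) * Real.log (a n) := by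
          apply mul_le_mul_of_nonneg_left _ (by positivity)
          exact Real.log_le_log hc (hlow n)
  · intro b hb
    have hb4 : (0:ℝ) < b/4 := by linarith
    obtain ⟨D, hD1, hD⟩ := hup (b/4) hb4
    have hDpos : (0:ℝ) < D := lt_of_lt_of_le zero_lt_one hD1
    have hev1 : ∀ᶠ n : ℕ in atTop, ((n:ℝ) + 1) ≤ Real.exp (b/4 * n) := by
      filter_upwards [eventually_ge_atTop (Nat.ceil ((64:ℝ)/b^2))] with n hn
      have hn' : (64:ℝ)/b^2 ≤ (n:ℝ) := by
        have := Nat.ceil_le.mp hn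
        exact_mod_cast this
      have hn0 : (0:ℝ) ≤ (n:ℝ) := Nat.cast_nonneg n
      have he : Real.exp (b/4 * n) = Real.exp (b/8 * n) ^ 2 := by
        rw [sq, ← Real.exp_add]; ring_nf
      have h2 : 1 + b/8 * (n:ℝ) ≤ Real.exp (b/8 * n) := by
        have := Real.add_one_le_exp (b/8 * (n:ℝ))
        linarith
      have h3 : (1 + b/8 * (n:ℝ))^2 ≤ Real.exp (b/8 * n) ^ 2 := by
        have hnn : (0:ℝ) ≤ 1 + b/8 * n := by positivity
        nlinarith
      rw [he]
      have hkey : (64:ℝ) ≤ b^2 * n := by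
        have hb2 : (0:ℝ) < b^2 := by positivity
        rw [div_le_iff₀ hb2] at hn'
        linarith [hn']
      nlinarith [sq_nonneg (b * (n:ℝ)), hn0, hb]
    filter_upwards [hev1,
      (tendsto_natCast_atTop_atTop (R := ℝ)).eventually_ge_atTop (4 * Real.log D / b),
      eventually_ge_atTop 1] with n h1 h2 hn1
    have hnpos : (0:ℝ) < n := by exact_mod_cast hn1
    have han : 0 < a n := lt_of_lt_of_le hc (hlow n)
    have hle : a n ≤ D * Real.exp (b/4*n) * Real.exp (b/4*n) := by
      refine le_trans (hD n) ?_
      have := mul_le_mul_of_nonneg_left h1 hDpos.le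
      nlinarith [Real.exp_pos (b/4*(n:ℝ))]
    have hlog : Real.log (a n) ≤ Real.log D + b/4*n + b/4*n := by
      calc Real.log (a n) ≤ Real.log (D * Real.exp (b/4*n) * Real.exp (b/4*n)) :=
            Real.log_le_log han hle
        _ = Real.log D + b/4*n + b/4*n := by
            rw [Real.log_mul (by positivity) (Real.exp_pos _).ne',
              Real.log_mul hDpos.ne' (Real.exp_pos _).ne', Real.log_exp]
    have hlogD : Real.log D ≤ b/4 * n := by
      have h2' : 4 * Real.log D / b ≤ (n:ℝ) := h2
      rw [div_le_iff₀ (by linarith : (0:ℝ) < b)] at h2'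
      nlinarith
    have hkey : Real.log (a n) ≤ (3*b/4) * n := by nlinarith
    calc (1/(n:ℝ)) * Real.log (a n) ≤ (1/(n:ℝ)) * ((3*b/4) * n) :=
          mul_le_mul_of_nonneg_left hkey (by positivity)
      _ = 3*b/4 := by field_simp
      _ < b := by linarith

end Stmt4Aux

/-- Under (H1), (H2), assuming moreover that `X` embeds in
`L¹([0,1], Leb)` (via an injective linear map `ι` with `‖ι f‖_{L¹} ≤ C₁ ‖f‖`), and that
each `𝓛_{k,ω}` preserves nonnegativity and integrals, then for each `k` and each `f ∈ X`
with `∫ f dm ≠ 0`, a.e. `(1/n) log ‖𝓛_{k,ω}^{(n)} f‖ → 0`, and consequently a.e.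
`(1/n) log ‖𝓛_{k,ω}^{(n)}‖ → 0`. -/
theorem stmt4 {Ω X : Type*} [MeasurableSpace Ω] (ℙ : Measure Ω) [IsProbabilityMeasure ℙ]
    (σ : Equiv.Perm Ω) (hσ : Measurable (⇑σ)) (hσinv : Measurable (⇑σ.symm))
    (herg : Ergodic (⇑σ) ℙ)
    [NormedAddCommGroup X] [NormedSpace ℝ X] [TopologicalSpace.SeparableSpace X]
    -- the weak norm `|·| = wn` on `X`
    (wn : X → ℝ)
    (wn_nonneg : ∀ x, 0 ≤ wn x)
    (wn_add : ∀ x y, wn (x + y) ≤ wn x + wn y)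
    (wn_smul : ∀ (c : ℝ) (x : X), wn (c • x) = |c| * wn x)
    (wn_def : ∀ x, wn x = 0 → x = 0)
    (C₀ : ℝ) (hC₀ : 0 < C₀) (hwn_le : ∀ x : X, wn x ≤ C₀ * ‖x‖)
    -- the family of operators, strongly measurable and bounded for both norms
    (L : ℕ → Ω → X →L[ℝ] X)
    (hLmeas : ∀ (k : ℕ) (f : X), StronglyMeasurable fun ω => L k ω f)
    (hLwb : ∀ (k : ℕ) (ω : Ω), ∃ c : ℝ, ∀ f : X, wn (L k ω f) ≤ c * wn f)
    -- Hypothesis (H1)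
    (B : ℝ) (hB : 0 < B)
    (α : Ω → ℝ) (hαmeas : Measurable α) (hαpos : ∀ ω, 0 < α ω)
    (hαint : Integrable (fun ω => Real.log (α ω)) ℙ)
    (hαneg : (∫ ω, Real.log (α ω) ∂ℙ) < 0)
    (hLY : ∀ k : ℕ, ∀ᵐ ω ∂ℙ, ∀ f : X, ‖L k ω f‖ ≤ α ω * ‖f‖ + B * wn f)
    -- Hypothesis (H2)
    (C : Ω → ℝ) (hCpos : ∀ ω, 0 ≤ C ω) (hCtemp : Tempered ℙ σ C)
    (hC : ∀ᵐ ω ∂ℙ, ∀ (k n : ℕ) (f : X),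
      wn (iterOp σ (L k) ((σ ^ (-(n : ℤ))) ω) n f) ≤ C ω * wn f)
    -- `X` is (identified with) a linear subspace of `L¹([0,1], Leb)`
    (μ : Measure ℝ) (hμ : μ = volume.restrict (Set.Icc (0 : ℝ) 1))
    (ι : X →ₗ[ℝ] Lp ℝ 1 μ) (hι_inj : Function.Injective ι)
    (C₁ : ℝ) (hC₁ : 0 < C₁) (hι_le : ∀ f : X, ‖ι f‖ ≤ C₁ * ‖f‖)
    -- each `𝓛_{k,ω}` preserves the cone of nonnegative functions and the integral
    (hpos : ∀ k : ℕ, ∀ᵐ ω ∂ℙ, ∀ f : X, 0 ≤ ι f → 0 ≤ ι (L k ω f))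
    (hint : ∀ k : ℕ, ∀ᵐ ω ∂ℙ, ∀ f : X,
      (∫ x, (ι (L k ω f) : Lp ℝ 1 μ) x ∂μ) = ∫ x, (ι f : Lp ℝ 1 μ) x ∂μ) :
    ∀ k : ℕ, ∀ f : X, (∫ x, (ι f : Lp ℝ 1 μ) x ∂μ) ≠ 0 →
      (∀ᵐ ω ∂ℙ, Tendsto
        (fun n : ℕ => (1 / (n : ℝ)) * Real.log ‖iterOp σ (L k) ω n f‖) atTop (nhds 0)) ∧
      (∀ᵐ ω ∂ℙ, Tendsto
        (fun n : ℕ => (1 / (n : ℝ)) * Real.log ‖iterOp σ (L k) ω n‖) atTop (nhds 0)) := by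
  intro k f hfint
  have hTmp : MeasurePreserving (⇑σ) ℙ ℙ := herg.toMeasurePreserving
  let e : Ω ≃ᵐ Ω := { toEquiv := σ, measurable_toFun := hσ, measurable_invFun := hσinv }
  have hsymm : MeasurePreserving (⇑σ.symm) ℙ ℙ := by
    have h : MeasurePreserving (⇑e) ℙ ℙ := hTmp
    exact h.symm e
  have hmpz : ∀ m : ℤ, MeasurePreserving (⇑(σ ^ m)) ℙ ℙ := by
    intro m
    induction m using Int.induction_on with
    | zero => simpa using MeasurePreserving.id ℙ
    | succ n ih =>
      have hzp : (σ : Equiv.Perm Ω) ^ ((n : ℤ) + 1) = σ ^ (n : ℤ) * σ := zpow_add_one σ n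
      rw [hzp, Equiv.Perm.coe_mul]
      exact ih.comp hTmp
    | pred n ih =>
      have hzp : (σ : Equiv.Perm Ω) ^ (-(n : ℤ) - 1) = σ ^ (-(n : ℤ)) * σ⁻¹ := zpow_sub_one σ _
      rw [hzp, Equiv.Perm.coe_mul]
      have hinv : ⇑(σ⁻¹) = ⇑σ.symm := rfl
      rw [hinv]
      exact ih.comp hsymm
  have aeZ : ∀ {P : Ω → Prop}, (∀ᵐ ω ∂ℙ, P ω) → (∀ᵐ ω ∂ℙ, ∀ m : ℤ, P ((σ ^ m) ω)) := by
    intro P hP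
    rw [ae_all_iff]
    intro m
    exact (hmpz m).quasiMeasurePreserving.ae hP
  have hgm : Measurable (fun ω' => Real.log (α ω')) := hαmeas.log
  have hbirk := Stmt4Aux.birkhoff_bound herg hgm hαint
  have hfne : f ≠ 0 := by
    intro h0
    apply hfint
    rw [h0, map_zero]
    have hz : ((0 : Lp ℝ 1 μ) : ℝ → ℝ) =ᵐ[μ] 0 := Lp.coeFn_zero ℝ 1 μ
    rw [integral_congr_ae hz]
    simp
  have hfnorm : 0 < ‖f‖ := norm_pos_iff.mpr hfne
  have hIpos : 0 < |∫ x, (ι f : Lp ℝ 1 μ) x ∂μ| := abs_pos.mpr hfint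
  have hc₀ : 0 < |∫ x, (ι f : Lp ℝ 1 μ) x ∂μ| / C₁ := div_pos hIpos hC₁
  have hmain : ∀ᵐ ω ∂ℙ,
      (Tendsto (fun n : ℕ => (1 / (n : ℝ)) * Real.log ‖iterOp σ (L k) ω n f‖)
        atTop (nhds 0)) ∧
      (Tendsto (fun n : ℕ => (1 / (n : ℝ)) * Real.log ‖iterOp σ (L k) ω n‖)
        atTop (nhds 0)) := by
    filter_upwards [aeZ (hLY k), aeZ hC, aeZ (hint k), hbirk, hCtemp] with ω h1 h2 h3 h4 h5
    -- pointwise consequences of the a.e. hypotheses along the orbit of ω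
    have hLYpt : ∀ (j : ℕ) (x : X),
        ‖L k ((σ ^ j) ω) x‖ ≤ α ((σ ^ j) ω) * ‖x‖ + B * wn x := by
      intro j x
      have h := h1 (j : ℤ) x
      rwa [zpow_natCast] at h
    have hWpt : ∀ (n : ℕ) (x : X),
        wn (iterOp σ (L k) ω n x) ≤ C ((σ ^ n) ω) * wn x := by
      intro n x
      have h := h2 (n : ℤ) k n x
      have hpt : (σ ^ (-(n : ℤ))) ((σ ^ ((n : ℕ) : ℤ)) ω) = ω := by
        rw [← Equiv.Perm.mul_apply, ← zpow_add]
        simp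
      rw [hpt, zpow_natCast] at h
      exact h
    have hIpt : ∀ n : ℕ, (∫ x, (ι (iterOp σ (L k) ω n f) : Lp ℝ 1 μ) x ∂μ)
        = ∫ x, (ι f : Lp ℝ 1 μ) x ∂μ := by
      intro n
      induction n with
      | zero => rfl
      | succ n ih =>
        have h := h3 (n : ℤ) (iterOp σ (L k) ω n f)
        rw [zpow_natCast] at h
        have happ : iterOp σ (L k) ω (n + 1) f
            = L k ((σ ^ n) ω) (iterOp σ (L k) ω n f) := rfl
        rw [happ, h, ih]
    -- lower bound
    have hlow : ∀ n : ℕ, |∫ x, (ι f : Lp ℝ 1 μ) x ∂μ| / C₁ ≤ ‖iterOp σ (L k) ω n f‖ := by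
      intro n
      have hn1 : ‖∫ x, (ι (iterOp σ (L k) ω n f) : Lp ℝ 1 μ) x ∂μ‖
          ≤ ‖ι (iterOp σ (L k) ω n f)‖ := by
        rw [L1.norm_eq_integral_norm]
        exact norm_integral_le_integral_norm _
      rw [hIpt n] at hn1
      have hn2 : ‖ι (iterOp σ (L k) ω n f)‖ ≤ C₁ * ‖iterOp σ (L k) ω n f‖ := hι_le _
      rw [Real.norm_eq_abs] at hn1
      rw [div_le_iff₀ hC₁]
      nlinarith
    -- upper bound machinery
    have hcore := Stmt4Aux.core_bound σ (L k) wn B C₀ hB hwn_le α C hαpos hCpos ω hLYpt hWpt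
    -- C bound
    have h5' : Tendsto (fun n : ℕ => (1 / (n : ℝ)) * Real.log (C ((σ ^ n) ω)))
        atTop (nhds 0) := by
      have hinj : Function.Injective (fun n : ℕ => (n : ℤ)) := fun a b h => by simpa using h
      have hcof : Tendsto (fun n : ℕ => (n : ℤ)) cofinite cofinite := hinj.tendsto_cofinite
      rw [← Nat.cofinite_eq_atTop]
      refine (h5.comp hcof).congr fun n => ?_
      show (1 / |(((n : ℕ) : ℤ) : ℝ)|) * Real.log |C ((σ ^ ((n : ℕ) : ℤ)) ω)|
          = (1 / (n : ℝ)) * Real.log (C ((σ ^ n) ω))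
      rw [zpow_natCast, Int.cast_natCast, Nat.abs_cast, abs_of_nonneg (hCpos _)]
    have hCbound : ∀ ε : ℝ, 0 < ε → ∃ K : ℝ, 1 ≤ K ∧
        ∀ n : ℕ, C ((σ ^ n) ω) ≤ K * Real.exp (ε * n) := by
      intro ε hε
      rw [Metric.tendsto_atTop] at h5'
      obtain ⟨N, hN⟩ := h5' ε hε
      have hsumnn : (0:ℝ) ≤ ∑ j ∈ Finset.range (N + 1), C ((σ ^ j) ω) :=
        Finset.sum_nonneg fun j _ => hCpos _
      refine ⟨1 + ∑ j ∈ Finset.range (N + 1), C ((σ ^ j) ω), by linarith, ?_⟩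
      intro n
      rcases lt_or_ge n (N + 1) with hn | hn
      · have hs1 : C ((σ ^ n) ω) ≤ ∑ j ∈ Finset.range (N + 1), C ((σ ^ j) ω) :=
          Finset.single_le_sum (fun j _ => hCpos ((σ ^ j) ω)) (Finset.mem_range.mpr hn)
        have hs2 : (1:ℝ) ≤ Real.exp (ε * n) :=
          Real.one_le_exp (by positivity)
        nlinarith
      · have hnN : N ≤ n := by omega
        have hn1 : 1 ≤ n := by omega
        have hd := hN n hnN
        rw [Real.dist_eq, sub_zero] at hd
        have hnpos : (0:ℝ) < n := by exact_mod_cast hn1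
        have hlog : Real.log (C ((σ ^ n) ω)) ≤ ε * n := by
          have h' := (abs_lt.mp hd).2
          have hre : Real.log (C ((σ ^ n) ω))
              = (n : ℝ) * ((1 / (n : ℝ)) * Real.log (C ((σ ^ n) ω))) := by
            field_simp
          rw [hre]
          calc (n : ℝ) * ((1 / (n : ℝ)) * Real.log (C ((σ ^ n) ω)))
              ≤ (n : ℝ) * ε := mul_le_mul_of_nonneg_left h'.le hnpos.le
            _ = ε * n := mul_comm _ _
        rcases eq_or_lt_of_le (hCpos ((σ ^ n) ω)) with h0 | h0
        · rw [← h0]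
          positivity
        · have hce : C ((σ ^ n) ω) = Real.exp (Real.log (C ((σ ^ n) ω))) :=
            (Real.exp_log h0).symm
          rw [hce]
          have he := Real.exp_le_exp.mpr hlog
          nlinarith [Real.exp_pos (ε * (n : ℝ))]
    have hweight := Stmt4Aux.weight_bound
      (fun m => birkhoffSum (⇑σ) (fun ω' => Real.log (α ω')) m ω)
      (fun j => C ((σ ^ j) ω)) (∫ ω', Real.log (α ω') ∂ℙ) hαneg (B * C₀)
      (by positivity) h4 hCbound
    constructor
    · -- first limit
      apply Stmt4Aux.tendsto_of_bounds _ _ hc₀ hlow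
      intro ε hε
      obtain ⟨D, hD1, hD⟩ := hweight ε hε
      have hD0 : (0:ℝ) ≤ D := by linarith
      refine ⟨D * max ‖f‖ 1, ?_, ?_⟩
      · have hm1 : (1:ℝ) ≤ max ‖f‖ 1 := le_max_right _ _
        nlinarith
      · intro n
        have hb1 := hcore n f
        have hb2 := hD n
        have hb3 := mul_le_mul_of_nonneg_right hb2 (norm_nonneg f)
        have hb4 : (D * ((n:ℝ) + 1) * Real.exp (ε * n)) * ‖f‖
            ≤ (D * ((n:ℝ) + 1) * Real.exp (ε * n)) * max ‖f‖ 1 :=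
          mul_le_mul_of_nonneg_left (le_max_left _ _)
            (mul_nonneg (mul_nonneg hD0 (by positivity)) (Real.exp_pos _).le)
        calc ‖iterOp σ (L k) ω n f‖
            ≤ (Real.exp (birkhoffSum (⇑σ) (fun ω' => Real.log (α ω')) n ω)
              + B * C₀ * ∑ j ∈ Finset.range n, C ((σ ^ j) ω) *
                Real.exp (birkhoffSum (⇑σ) (fun ω' => Real.log (α ω')) n ω
                  - birkhoffSum (⇑σ) (fun ω' => Real.log (α ω')) (j + 1) ω)) * ‖f‖ := hb1
          _ ≤ (D * ((n:ℝ) + 1) * Real.exp (ε * n)) * ‖f‖ := hb3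
          _ ≤ (D * ((n:ℝ) + 1) * Real.exp (ε * n)) * max ‖f‖ 1 := hb4
          _ = D * max ‖f‖ 1 * ((n:ℝ) + 1) * Real.exp (ε * n) := by ring
    · -- second limit : operator norms
      have hWnonneg : ∀ n : ℕ, (0:ℝ) ≤
          Real.exp (birkhoffSum (⇑σ) (fun ω' => Real.log (α ω')) n ω)
            + B * C₀ * ∑ j ∈ Finset.range n, C ((σ ^ j) ω) *
              Real.exp (birkhoffSum (⇑σ) (fun ω' => Real.log (α ω')) n ω
                - birkhoffSum (⇑σ) (fun ω' => Real.log (α ω')) (j + 1) ω) := by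
        intro n
        have hs : (0:ℝ) ≤ ∑ j ∈ Finset.range n, C ((σ ^ j) ω) *
            Real.exp (birkhoffSum (⇑σ) (fun ω' => Real.log (α ω')) n ω
              - birkhoffSum (⇑σ) (fun ω' => Real.log (α ω')) (j + 1) ω) :=
          Finset.sum_nonneg fun j _ => mul_nonneg (hCpos _) (Real.exp_pos _).le
        have he := Real.exp_pos (birkhoffSum (⇑σ) (fun ω' => Real.log (α ω')) n ω)
        have h2 := mul_nonneg (le_of_lt (by positivity : (0:ℝ) < B * C₀)) hs
        linarith
      have hop_up : ∀ n : ℕ, ‖iterOp σ (L k) ω n‖ ≤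
          Real.exp (birkhoffSum (⇑σ) (fun ω' => Real.log (α ω')) n ω)
            + B * C₀ * ∑ j ∈ Finset.range n, C ((σ ^ j) ω) *
              Real.exp (birkhoffSum (⇑σ) (fun ω' => Real.log (α ω')) n ω
                - birkhoffSum (⇑σ) (fun ω' => Real.log (α ω')) (j + 1) ω) := fun n =>
        ContinuousLinearMap.opNorm_le_bound _ (hWnonneg n) (hcore n)
      have hop_low : ∀ n : ℕ,
          (|∫ x, (ι f : Lp ℝ 1 μ) x ∂μ| / C₁) / ‖f‖ ≤ ‖iterOp σ (L k) ω n‖ := by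
        intro n
        rw [div_le_iff₀ hfnorm]
        calc |∫ x, (ι f : Lp ℝ 1 μ) x ∂μ| / C₁ ≤ ‖iterOp σ (L k) ω n f‖ := hlow n
          _ ≤ ‖iterOp σ (L k) ω n‖ * ‖f‖ := ContinuousLinearMap.le_opNorm _ f
      apply Stmt4Aux.tendsto_of_bounds _ _ (div_pos hc₀ hfnorm) hop_low
      intro ε hε
      obtain ⟨D, hD1, hD⟩ := hweight ε hε
      exact ⟨D, hD1, fun n => le_trans (hop_up n) (hD n)⟩
  exact ⟨hmain.mono fun ω h => h.1, hmain.mono fun ω h => h.2⟩
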